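/- Let p be an odd prime, let d ∈ ℤ_p, let β ∈ ℤ_p be a unit with β² = d, and let r ∈ ℤ_p satisfy r ≡ β (mod p·ℤ_p). Set N₀ = (r² − d)/2 ∈ ℤ_p. Then N₀ ∈ p·ℤ_p, and for all units t, s ∈ ℤ_p^×, the matrix γ(t, s) = [[ (t+s)/2 − r(t−s)/(2β) , (t−s)/β ], [ −N₀(t−s)/(2β) , (t+s)/2 + r(t−s)/(2β) ]] has all entries in ℤ_p, has determinant t·s ∈ ℤ_p^×, and its lower-left entry −N₀(t−s)/(2β) lies in p·ℤ_p. -/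

import Mathlib

/-- The p-adic content of Lemma 5.5 (compactemb): the explicit embedding of
`ℤ_p^× × ℤ_p^×` lands in the compact open subgroup `K₀(p)_p ⊆ GL₂(ℤ_p)`. -/
theorem embedding_lands_in_K0p
    (p : ℕ) [Fact p.Prime] (hodd : Odd p)
    (d : ℤ_[p]) (β : ℤ_[p]) (hβ : IsUnit β) (hβd : β ^ 2 = d)
    (r : ℤ_[p]) (hr : (p : ℤ_[p]) ∣ (r - β))
    (N₀ : ℤ_[p]) (hN₀ : 2 * N₀ = r ^ 2 - d) :
    (p : ℤ_[p]) ∣ N₀ ∧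
    ∀ t s : ℤ_[p], IsUnit t → IsUnit s →
      ∀ γ : Matrix (Fin 2) (Fin 2) ℚ_[p],
        γ = !![((t : ℚ_[p]) + (s : ℚ_[p])) / 2
                 - (r : ℚ_[p]) * ((t : ℚ_[p]) - (s : ℚ_[p])) / (2 * (β : ℚ_[p])),
               ((t : ℚ_[p]) - (s : ℚ_[p])) / (β : ℚ_[p]);
               -(N₀ : ℚ_[p]) * ((t : ℚ_[p]) - (s : ℚ_[p])) / (2 * (β : ℚ_[p])),
               ((t : ℚ_[p]) + (s : ℚ_[p])) / 2
                 + (r : ℚ_[p]) * ((t : ℚ_[p]) - (s : ℚ_[p])) / (2 * (β : ℚ_[p]))] →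
        (∀ i j, ∃ z : ℤ_[p], γ i j = (z : ℚ_[p])) ∧
        (γ.det = (t : ℚ_[p]) * (s : ℚ_[p]) ∧ IsUnit (t * s)) ∧
        (∃ z : ℤ_[p], γ 1 0 = (p : ℚ_[p]) * (z : ℚ_[p])) := by
  have hp := (Fact.out : p.Prime)
  -- 2 is a unit in ℤ_[p]
  have h2 : IsUnit (2 : ℤ_[p]) := by
    rw [PadicInt.isUnit_iff]
    rcases lt_or_eq_of_le (PadicInt.norm_le_one (2 : ℤ_[p])) with h | h
    · exfalso
      have h2' : ((2 : ℤ) : ℤ_[p]) = (2 : ℤ_[p]) := by push_cast; ring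
      rw [← h2', PadicInt.norm_int_lt_one_iff_dvd] at h
      have hpd : p ∣ 2 := by exact_mod_cast h
      have hp2 : p = 2 := (Nat.prime_dvd_prime_iff_eq hp Nat.prime_two).mp hpd
      rw [hp2] at hodd
      simp [Nat.odd_iff] at hodd
    · exact h
  obtain ⟨u2, hu2⟩ := h2
  obtain ⟨uβ, huβ⟩ := hβ
  set c2 : ℤ_[p] := ((u2⁻¹ : ℤ_[p]ˣ) : ℤ_[p]) with hc2def
  set cβ : ℤ_[p] := ((uβ⁻¹ : ℤ_[p]ˣ) : ℤ_[p]) with hcβdef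
  have hc2 : c2 * 2 = 1 := by rw [hc2def, ← hu2]; exact u2.inv_mul
  have hcβ : cβ * β = 1 := by rw [hcβdef, ← huβ]; exact uβ.inv_mul
  have h2Q : ((2 : ℤ_[p]) : ℚ_[p]) = (2 : ℚ_[p]) := by norm_cast
  have h2ne : (2 : ℚ_[p]) ≠ 0 := two_ne_zero
  have hβ0 : β ≠ 0 := by rw [← huβ]; exact uβ.ne_zero
  have hβne : ((β : ℤ_[p]) : ℚ_[p]) ≠ 0 := by
    simpa [PadicInt.coe_ne_zero] using hβ0
  have hc2Q : ((c2 : ℤ_[p]) : ℚ_[p]) = (2 : ℚ_[p])⁻¹ := by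
    have := congrArg (PadicInt.Coe.ringHom (p := p)) hc2
    simp only [map_mul, map_one] at this
    exact eq_inv_of_mul_eq_one_left (by rw [← h2Q]; exact this)
  have hcβQ : ((cβ : ℤ_[p]) : ℚ_[p]) = ((β : ℤ_[p]) : ℚ_[p])⁻¹ := by
    have := congrArg (PadicInt.Coe.ringHom (p := p)) hcβ
    simp only [map_mul, map_one] at this
    exact eq_inv_of_mul_eq_one_left this
  -- p ∣ N₀
  have hdvd : (p : ℤ_[p]) ∣ N₀ := by
    have h1 : (p : ℤ_[p]) ∣ 2 * N₀ := by
      rw [hN₀, ← hβd]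
      have : r ^ 2 - β ^ 2 = (r - β) * (r + β) := by ring
      rw [this]
      exact Dvd.dvd.mul_right hr _
    obtain ⟨k, hk⟩ := h1
    exact ⟨c2 * k, by
      have : N₀ = c2 * (2 * N₀) := by rw [← mul_assoc, mul_comm c2 2, mul_comm 2 c2, hc2, one_mul]
      rw [this, hk]; ring⟩
  refine ⟨hdvd, ?_⟩
  intro t s ht hs γ hγ
  obtain ⟨n, hn⟩ := hdvd
  subst hγ
  have key : ∀ a : ℤ_[p], ∀ x : ℚ_[p], ((a : ℤ_[p]) : ℚ_[p]) = x → ∃ z : ℤ_[p], x = (z : ℚ_[p]) :=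
    fun a x h => ⟨a, h.symm⟩
  refine ⟨?_, ⟨?_, ht.mul hs⟩, ?_⟩
  · intro i j
    fin_cases i <;> fin_cases j <;>
      simp only [Matrix.cons_val', Matrix.cons_val_zero, Matrix.empty_val',
        Matrix.cons_val_fin_one, Matrix.cons_val_one, Matrix.head_cons, Matrix.head_fin_const, Matrix.of_apply]
    · refine ⟨(t + s) * c2 - r * (t - s) * c2 * cβ, ?_⟩
      push_cast [hc2Q, hcβQ]
      field_simp
      try ring
    · refine ⟨(t - s) * cβ, ?_⟩
      push_cast [hcβQ]
      field_simp
    · refine ⟨-N₀ * (t - s) * c2 * cβ, ?_⟩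
      push_cast [hc2Q, hcβQ]
      field_simp
      try ring
    · refine ⟨(t + s) * c2 + r * (t - s) * c2 * cβ, ?_⟩
      push_cast [hc2Q, hcβQ]
      field_simp
      try ring
  · rw [Matrix.det_fin_two_of]
    have hN : (2 : ℚ_[p]) * (N₀ : ℚ_[p]) = (r : ℚ_[p]) ^ 2 - (d : ℚ_[p]) := by
      exact_mod_cast congrArg (PadicInt.Coe.ringHom (p := p)) hN₀
    have hd : ((β : ℤ_[p]) : ℚ_[p]) ^ 2 = (d : ℚ_[p]) := by
      exact_mod_cast congrArg (PadicInt.Coe.ringHom (p := p)) hβd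
    have hNβ : (2 : ℚ_[p]) * (N₀ : ℚ_[p]) = (r : ℚ_[p]) ^ 2 - ((β : ℤ_[p]) : ℚ_[p]) ^ 2 := by
      rw [hN, ← hd]
    field_simp
    linear_combination (((t : ℚ_[p]) - s) ^ 2) * hNβ
  · refine ⟨-n * (t - s) * c2 * cβ, ?_⟩
    show -(N₀ : ℚ_[p]) * ((t : ℚ_[p]) - (s : ℚ_[p])) / (2 * (β : ℚ_[p])) = _
    push_cast [hc2Q, hcβQ, hn]
    field_simp
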